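/- Let n be a positive integer and let ρ and σ be n×n positive definite complex matrices with trace 1. For every n×n unitary matrix U one has Tr(ρ² (U*σU)⁻¹) ≥ Σ_{i=1}^n λ↓ᵢ(ρ)² / λ↓ᵢ(σ), and equality holds for U = W↓ V↓*. Consequently the minimum of U ↦ Tr(ρ² (U*σU)⁻¹) over the unitary group is Σ_{i=1}^n λ↓ᵢ(ρ)² / λ↓ᵢ(σ) and it is attained at W↓ V↓*. -/

import Mathlib

open Matrix
open scoped ComplexOrder

lemma myCancel {n : ℕ} {P Q : Matrix (Fin n) (Fin n) ℂ} (h : P * Q = 1) :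
    ∀ X : Matrix (Fin n) (Fin n) ℂ, P * (Q * X) = X := fun X => by
  rw [← Matrix.mul_assoc, h, Matrix.one_mul]

lemma myPosDefConj {n : ℕ} {ρ V : Matrix (Fin n) (Fin n) ℂ} (hρ : ρ.PosDef)
    (hV : V ∈ Matrix.unitaryGroup (Fin n) ℂ) : (Vᴴ * ρ * V).PosDef := by
  have hV1 : Vᴴ * V = 1 := by
    simpa [Matrix.star_eq_conjTranspose] using (Matrix.mem_unitaryGroup_iff'.mp hV)
  refine Matrix.posDef_iff_dotProduct_mulVec.mpr ⟨?_, ?_⟩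
  · show (Vᴴ * ρ * V)ᴴ = Vᴴ * ρ * V
    simp [Matrix.conjTranspose_mul, hρ.1.eq, Matrix.mul_assoc]
  · intro x hx
    have hnz : V *ᵥ x ≠ 0 := by
      intro h
      apply hx
      have : Vᴴ *ᵥ (V *ᵥ x) = 0 := by rw [h, Matrix.mulVec_zero]
      rwa [Matrix.mulVec_mulVec, hV1, Matrix.one_mulVec] at this
    have := hρ.dotProduct_mulVec_pos hnz
    convert this using 1
    simp [Matrix.star_mulVec, Matrix.mulVec_mulVec, Matrix.dotProduct_mulVec,
      Matrix.vecMul_vecMul, Matrix.mul_assoc]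

lemma myDSBound {n : ℕ} (a b : Fin n → ℝ) (hab : Antivary b a)
    (B : Matrix (Fin n) (Fin n) ℝ) (hB : B ∈ doublyStochastic ℝ (Fin n)) :
    ∑ i, b i * a i ≤ ∑ i, ∑ j, B i j * (b i * a j) := by
  obtain ⟨w, hw0, hw1, hwB⟩ := exists_eq_sum_perm_of_mem_doublyStochastic hB
  have key : ∀ π : Equiv.Perm (Fin n), ∑ i, b i * a i ≤ ∑ i, b i * a (π i) := by
    intro π
    simpa [smul_eq_mul] using hab.sum_smul_le_sum_smul_comp_perm (σ := π)
  have hBij : ∀ i j, B i j = ∑ π : Equiv.Perm (Fin n), w π * (if π i = j then 1 else 0) := by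
    intro i j
    rw [← hwB]
    simp [Matrix.sum_apply, PEquiv.toMatrix_apply, Equiv.toPEquiv_apply, Equiv.Perm.permMatrix,
      smul_eq_mul]
  calc ∑ i, b i * a i = ∑ π : Equiv.Perm (Fin n), w π * ∑ i, b i * a i := by
        rw [← Finset.sum_mul, hw1, one_mul]
    _ ≤ ∑ π : Equiv.Perm (Fin n), w π * ∑ i, b i * a (π i) :=
        Finset.sum_le_sum fun π _ => mul_le_mul_of_nonneg_left (key π) (hw0 π)
    _ = ∑ i, ∑ j, B i j * (b i * a j) := by
        rw [show (∑ i, ∑ j, B i j * (b i * a j))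
            = ∑ i, ∑ π : Equiv.Perm (Fin n), w π * (b i * a (π i)) from
          Finset.sum_congr rfl fun i _ => by
            simp only [hBij, Finset.sum_mul]
            rw [Finset.sum_comm]
            refine Finset.sum_congr rfl fun π _ => ?_
            simp [mul_ite, ite_mul, Finset.sum_ite_eq],
          Finset.sum_comm]
        simp [Finset.mul_sum]

lemma myTraceEntry {n : ℕ} (a e : Fin n → ℂ) (Q : Matrix (Fin n) (Fin n) ℂ) :
    (Matrix.diagonal a * (Qᴴ * Matrix.diagonal e * Q)).trace
      = ∑ k, ∑ i, a k * e i * (star (Q i k) * Q i k) := by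
  have h1 : ∀ k, (Matrix.diagonal a * (Qᴴ * Matrix.diagonal e * Q)) k k
      = ∑ i, a k * e i * (star (Q i k) * Q i k) := by
    intro k
    rw [Matrix.diagonal_mul, Matrix.mul_apply, Finset.mul_sum]
    refine Finset.sum_congr rfl fun i _ => ?_
    rw [Matrix.mul_diagonal, Matrix.conjTranspose_apply]
    ring
  simp only [Matrix.trace, Matrix.diag]
  exact Finset.sum_congr rfl fun k _ => h1 k

/-- For faithful quantum states `ρ, σ`, with `r = λ↓(ρ)` and `d = λ↓(σ)`
(encoded by unitary diagonalizations with antitone diagonals), for every unitary `U`,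
`Tr(ρ² (U*σU)⁻¹) ≥ Σᵢ r i ^ 2 / d i`, with equality at `U = W↓ V↓*`; hence this
value is the minimum over the unitary group, attained at `W↓ V↓*`. -/
theorem stmt0 (n : ℕ) (hn : 0 < n)
    (ρ σ : Matrix (Fin n) (Fin n) ℂ)
    (hρ : ρ.PosDef) (hσ : σ.PosDef)
    (hρtr : ρ.trace = 1) (hσtr : σ.trace = 1)
    (r d : Fin n → ℝ) (hr : Antitone r) (hd : Antitone d)
    (V W : Matrix (Fin n) (Fin n) ℂ)
    (hV : V ∈ Matrix.unitaryGroup (Fin n) ℂ)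
    (hW : W ∈ Matrix.unitaryGroup (Fin n) ℂ)
    (hVρ : Vᴴ * ρ * V = Matrix.diagonal (fun i => (r i : ℂ)))
    (hWσ : Wᴴ * σ * W = Matrix.diagonal (fun i => (d i : ℂ))) :
    (∀ U ∈ Matrix.unitaryGroup (Fin n) ℂ,
        (∑ i, r i ^ 2 / d i) ≤ ((ρ ^ 2 * (Uᴴ * σ * U)⁻¹).trace).re) ∧
    (ρ ^ 2 * ((W * Vᴴ)ᴴ * σ * (W * Vᴴ))⁻¹).trace = ((∑ i, r i ^ 2 / d i : ℝ) : ℂ) := by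
  -- basic unitary facts
  have hVV : Vᴴ * V = 1 := by
    simpa [Matrix.star_eq_conjTranspose] using (Matrix.mem_unitaryGroup_iff'.mp hV)
  have hVV' : V * Vᴴ = 1 := by
    simpa [Matrix.star_eq_conjTranspose] using (Matrix.mem_unitaryGroup_iff.mp hV)
  have hWW : Wᴴ * W = 1 := by
    simpa [Matrix.star_eq_conjTranspose] using (Matrix.mem_unitaryGroup_iff'.mp hW)
  have hWW' : W * Wᴴ = 1 := by
    simpa [Matrix.star_eq_conjTranspose] using (Matrix.mem_unitaryGroup_iff.mp hW)
  -- positivity of eigenvalues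
  have hrpos : ∀ i, 0 < r i := by
    intro i
    have h1 := myPosDefConj hρ hV
    rw [hVρ, Matrix.posDef_diagonal_iff] at h1
    exact_mod_cast h1 i
  have hdpos : ∀ i, 0 < d i := by
    intro i
    have h1 := myPosDefConj hσ hW
    rw [hWσ, Matrix.posDef_diagonal_iff] at h1
    exact_mod_cast h1 i
  have hDE : Matrix.diagonal (fun i => ((d i : ℝ) : ℂ))
      * Matrix.diagonal (fun i => (((d i)⁻¹ : ℝ) : ℂ)) = 1 := by
    rw [Matrix.diagonal_mul_diagonal]
    rw [show (fun i => ((d i : ℝ) : ℂ) * (((d i)⁻¹ : ℝ) : ℂ)) = fun _ => (1 : ℂ) from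
      funext fun i => by
        push_cast
        field_simp [(hdpos i).ne']]
    exact Matrix.diagonal_one
  have hρV : ρ = V * Matrix.diagonal (fun i => ((r i : ℝ) : ℂ)) * Vᴴ := by
    rw [← hVρ]
    rw [show V * (Vᴴ * ρ * V) * Vᴴ = (V * Vᴴ) * ρ * (V * Vᴴ) by
      simp only [Matrix.mul_assoc]]
    rw [hVV', Matrix.one_mul, Matrix.mul_one]
  have hσW : σ = W * Matrix.diagonal (fun i => ((d i : ℝ) : ℂ)) * Wᴴ := by
    rw [← hWσ]
    rw [show W * (Wᴴ * σ * W) * Wᴴ = (W * Wᴴ) * σ * (W * Wᴴ) by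
      simp only [Matrix.mul_assoc]]
    rw [hWW', Matrix.one_mul, Matrix.mul_one]
  have hρ2 : ρ ^ 2 = V * Matrix.diagonal (fun i => ((r i : ℝ) : ℂ) ^ 2) * Vᴴ := by
    rw [hρV, pow_two]
    simp only [Matrix.mul_assoc]
    rw [myCancel hVV]
    rw [show Matrix.diagonal (fun i => ((r i : ℝ) : ℂ))
          * (Matrix.diagonal (fun i => ((r i : ℝ) : ℂ)) * Vᴴ)
        = Matrix.diagonal (fun i => ((r i : ℝ) : ℂ) ^ 2) * Vᴴ by
      rw [← Matrix.mul_assoc, Matrix.diagonal_mul_diagonal]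
      congr 1
      funext i
      ring]
  constructor
  · -- the inequality for every unitary U
    intro U hU
    have hUU : Uᴴ * U = 1 := by
      simpa [Matrix.star_eq_conjTranspose] using (Matrix.mem_unitaryGroup_iff'.mp hU)
    have hUU' : U * Uᴴ = 1 := by
      simpa [Matrix.star_eq_conjTranspose] using (Matrix.mem_unitaryGroup_iff.mp hU)
    set Q : Matrix (Fin n) (Fin n) ℂ := Wᴴ * (U * V) with hQ
    have hQconj : Qᴴ = Vᴴ * (Uᴴ * W) := by
      rw [hQ]
      simp [Matrix.conjTranspose_mul, Matrix.mul_assoc]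
    have hQQ : Qᴴ * Q = 1 := by
      rw [hQconj, hQ]
      simp only [Matrix.mul_assoc]
      rw [myCancel hWW', myCancel hUU, hVV]
    have hQQ' : Q * Qᴴ = 1 := by
      rw [hQ, hQconj]
      simp only [Matrix.mul_assoc]
      rw [myCancel hVV', myCancel hUU', hWW]
    -- the inverse
    have hinv : (Uᴴ * σ * U)⁻¹
        = Uᴴ * (W * (Matrix.diagonal (fun i => (((d i)⁻¹ : ℝ) : ℂ)) * (Wᴴ * U))) := by
      refine Matrix.inv_eq_right_inv ?_
      rw [hσW]
      simp only [Matrix.mul_assoc]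
      rw [myCancel hUU', myCancel hWW, myCancel hDE, myCancel hWW', hUU]
    -- trace computation
    have htr : (ρ ^ 2 * (Uᴴ * σ * U)⁻¹).trace
        = (Matrix.diagonal (fun i => ((r i : ℝ) : ℂ) ^ 2)
            * (Qᴴ * Matrix.diagonal (fun i => (((d i)⁻¹ : ℝ) : ℂ)) * Q)).trace := by
      rw [hinv, hρ2]
      rw [show V * Matrix.diagonal (fun i => ((r i : ℝ) : ℂ) ^ 2) * Vᴴ
            * (Uᴴ * (W * (Matrix.diagonal (fun i => (((d i)⁻¹ : ℝ) : ℂ)) * (Wᴴ * U))))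
          = V * (Matrix.diagonal (fun i => ((r i : ℝ) : ℂ) ^ 2)
            * (Qᴴ * Matrix.diagonal (fun i => (((d i)⁻¹ : ℝ) : ℂ)) * Q) * Vᴴ) by
        rw [hQconj, hQ]
        simp only [Matrix.mul_assoc]
        rw [hVV', Matrix.mul_one]]
      rw [Matrix.trace_mul_comm, Matrix.mul_assoc, hVV, Matrix.mul_one]
    rw [htr, myTraceEntry]
    have hstar : ∀ z : ℂ, star z * z = ((Complex.normSq z : ℝ) : ℂ) := fun z => by
      rw [mul_comm]
      exact Complex.mul_conj _
    simp only [hstar]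
    simp only [← Complex.ofReal_pow, ← Complex.ofReal_inv, ← Complex.ofReal_mul,
      ← Complex.ofReal_sum, Complex.ofReal_re]
    -- double stochasticity
    set B : Matrix (Fin n) (Fin n) ℝ := Matrix.of (fun i j => Complex.normSq (Q i j)) with hB
    have hrow : ∀ i, ∑ j, B i j = 1 := by
      intro i
      have h1 : (Q * Qᴴ) i i = 1 := by rw [hQQ']; simp
      rw [Matrix.mul_apply] at h1
      have h2 : ∑ j, ((Complex.normSq (Q i j) : ℝ) : ℂ) = ((1 : ℝ) : ℂ) := by
        rw [Complex.ofReal_one, ← h1]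
        exact Finset.sum_congr rfl fun j _ => by
          rw [Matrix.conjTranspose_apply, ← Complex.mul_conj]
          rfl
      have h3 := h2
      rw [← Complex.ofReal_sum] at h3
      exact_mod_cast h3
    have hcol : ∀ j, ∑ i, B i j = 1 := by
      intro j
      have h1 : (Qᴴ * Q) j j = 1 := by rw [hQQ]; simp
      rw [Matrix.mul_apply] at h1
      have h2 : ∑ i, ((Complex.normSq (Q i j) : ℝ) : ℂ) = ((1 : ℝ) : ℂ) := by
        rw [Complex.ofReal_one, ← h1]
        exact Finset.sum_congr rfl fun i _ => by
          rw [Matrix.conjTranspose_apply, ← Complex.mul_conj, mul_comm]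
          rfl
      have h3 := h2
      rw [← Complex.ofReal_sum] at h3
      exact_mod_cast h3
    have hBds : B ∈ doublyStochastic ℝ (Fin n) := by
      rw [mem_doublyStochastic_iff_sum]
      exact ⟨fun i j => Complex.normSq_nonneg _, hrow, hcol⟩
    -- antivary
    have hab : Antivary (fun i => (d i)⁻¹) (fun j => r j ^ 2) := by
      intro i j hij
      simp only at hij ⊢
      have hji : j ≤ i := by
        by_contra h
        push_neg at h
        exact absurd hij (not_lt.2 (pow_le_pow_left₀ (hrpos j).le (hr h.le) 2))
      exact inv_anti₀ (hdpos i) (hd hji)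
    have hmain := myDSBound (fun j => r j ^ 2) (fun i => (d i)⁻¹) hab B hBds
    calc (∑ i, r i ^ 2 / d i) = ∑ i, (d i)⁻¹ * r i ^ 2 := by
          exact Finset.sum_congr rfl fun i _ => by rw [div_eq_mul_inv]; ring
      _ ≤ ∑ i, ∑ j, B i j * ((d i)⁻¹ * r j ^ 2) := hmain
      _ = ∑ k, ∑ i, r k ^ 2 * (d i)⁻¹ * Complex.normSq (Q i k) := by
          rw [Finset.sum_comm]
          exact Finset.sum_congr rfl fun k _ => Finset.sum_congr rfl fun i _ => by
            rw [hB]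
            simp only [Matrix.of_apply]
            ring
  · -- equality at U = W Vᴴ
    have hconj : (W * Vᴴ)ᴴ = V * Wᴴ := by
      simp [Matrix.conjTranspose_mul]
    have hX : (W * Vᴴ)ᴴ * σ * (W * Vᴴ)
        = V * (Matrix.diagonal (fun i => ((d i : ℝ) : ℂ)) * Vᴴ) := by
      rw [hconj, hσW]
      simp only [Matrix.mul_assoc]
      rw [myCancel hWW, myCancel hWW]
    have hXinv : ((W * Vᴴ)ᴴ * σ * (W * Vᴴ))⁻¹
        = V * (Matrix.diagonal (fun i => (((d i)⁻¹ : ℝ) : ℂ)) * Vᴴ) := by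
      refine Matrix.inv_eq_right_inv ?_
      rw [hX]
      simp only [Matrix.mul_assoc]
      rw [myCancel hVV, myCancel hDE, hVV']
    rw [hXinv, hρ2]
    rw [show V * Matrix.diagonal (fun i => ((r i : ℝ) : ℂ) ^ 2) * Vᴴ
          * (V * (Matrix.diagonal (fun i => (((d i)⁻¹ : ℝ) : ℂ)) * Vᴴ))
        = V * (Matrix.diagonal (fun i => ((r i : ℝ) : ℂ) ^ 2)
          * Matrix.diagonal (fun i => (((d i)⁻¹ : ℝ) : ℂ)) * Vᴴ) by
      simp only [Matrix.mul_assoc]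
      rw [myCancel hVV]]
    rw [Matrix.trace_mul_comm, Matrix.mul_assoc, hVV, Matrix.mul_one,
      Matrix.diagonal_mul_diagonal, Matrix.trace_diagonal]
    push_cast
    exact Finset.sum_congr rfl fun i _ => by
      rw [div_eq_mul_inv]
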